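/- Dimensional monotonicity: suppose the achievement matrix x is obtained from y by a dimensional increment among the poor, i.e. there is a single entry (i', j') with x_{i'j'} > z_{j'} > y_{i'j'} (so x_{i'j'} > y_{i'j'} and the increment lifts person i' above the cutoff in dimension j'), all other entries of x and y coincide, and person i' is poor in y (ρ_k(y_{i'}) = 1). Then for all α ≥ 0, FGT_α(x; z) < FGT_α(y; z). -/
import Mathlib


open Finset

/-- Deprivation gap `r_{ij}^α` for an achievement row `y` (convention `0 ^ (0:ℝ) = 1`). -/
noncomputable def gap {d : ℕ} (z y : Fin d → ℝ) (α : ℝ) (j : Fin d) : ℝ :=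
  if y j ≤ z j then ((z j - y j) / z j) ^ α else 0

/-- Network-adjusted deprivation `D_{ij}^α`. -/
noncomputable def Dnet {d : ℕ} (M : Fin d → Fin d → ℝ) (z y : Fin d → ℝ) (α : ℝ)
    (j : Fin d) : ℝ :=
  gap z y α j + (1 / ((d : ℝ) - 1)) * ∑ j' ∈ Finset.univ.erase j, M j j' * gap z y α j'

/-- Sum `Σ_j` of the `j`-th column of `M`. -/
noncomputable def colSum {d : ℕ} (M : Fin d → Fin d → ℝ) (j : Fin d) : ℝ := ∑ j', M j' j

/-- Weighted deprivation count `D_i = Σ_j w_j D_{ij}^0`. -/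
noncomputable def Dcount {d : ℕ} (M : Fin d → Fin d → ℝ) (z w y : Fin d → ℝ) : ℝ :=
  ∑ j, w j * Dnet M z y 0 j

/-- Dual-cutoff identification function `ρ_k`. -/
noncomputable def rho {d : ℕ} (M : Fin d → Fin d → ℝ) (z w : Fin d → ℝ) (k : ℝ)
    (y : Fin d → ℝ) : ℝ :=
  if k ≤ Dcount M z w y then 1 else 0

/-- Network-adjusted FGT measure with normalizing constant `dt`. -/
noncomputable def FGT {N d : ℕ} (M : Fin d → Fin d → ℝ) (z w : Fin d → ℝ) (k α dt : ℝ)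
    (y : Fin N → Fin d → ℝ) : ℝ :=
  (1 / ((N : ℝ) * dt)) * ∑ i, ∑ j, w j * Dnet M z (y i) α j * rho M z w k (y i)

lemma gap_nonneg {d : ℕ} (z y : Fin d → ℝ) (hz : ∀ j, 0 < z j) (α : ℝ) (j : Fin d) :
    0 ≤ gap z y α j := by
  unfold gap
  split
  · exact Real.rpow_nonneg (div_nonneg (by linarith [hz j, ‹y j ≤ z j›]) (hz j).le) α
  · exact le_rfl

lemma gap_pos {d : ℕ} (z y : Fin d → ℝ) (hz : ∀ j, 0 < z j) (α : ℝ) (j : Fin d)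
    (h : y j < z j) : 0 < gap z y α j := by
  unfold gap
  rw [if_pos h.le]
  exact Real.rpow_pos_of_pos (div_pos (by linarith) (hz j)) α

/-- dimensional monotonicity — a dimensional increment among the poor strictly
decreases FGT. -/
theorem FGT_dimensional_monotonicity
    (d : ℕ) (hd : 2 ≤ d) (z : Fin d → ℝ) (hz : ∀ j, 0 < z j)
    (M : Fin d → Fin d → ℝ) (hM0 : ∀ j j', 0 ≤ M j j') (hM1 : ∀ j j', M j j' ≤ 1)
    (hMdiag : ∀ j, M j j = 1)
    (w : Fin d → ℝ) (hw : ∀ j, 0 < w j) (hwsum : (∑ j, w j) = (d : ℝ))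
    (dt : ℝ) (hdt : dt = (d : ℝ) + ((∑ j, w j * colSum M j) - (d : ℝ)) / ((d : ℝ) - 1))
    (k : ℝ) (hk0 : 0 < k) (hk1 : k ≤ dt) (α : ℝ) (hα : 0 ≤ α)
    (N : ℕ) (hN : 1 ≤ N)
    (x y : Fin N → Fin d → ℝ) (hx : ∀ i j, 0 ≤ x i j) (hy : ∀ i j, 0 ≤ y i j)
    (i' : Fin N) (j' : Fin d) (hdep : y i' j' < z j') (hlift : z j' < x i' j')
    (hother : ∀ i j, ¬(i = i' ∧ j = j') → x i j = y i j)
    (hpoor : rho M z w k (y i') = 1) :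
    FGT M z w k α dt x < FGT M z w k α dt y := by
  have hdtpos : 0 < dt := lt_of_lt_of_le hk0 hk1
  have hNpos : (0:ℝ) < N := by exact_mod_cast hN
  have hcpos : (0:ℝ) < 1 / ((d:ℝ) - 1) := by
    have h2 : (2:ℝ) ≤ d := by exact_mod_cast hd
    have : (0:ℝ) < (d:ℝ) - 1 := by linarith
    positivity
  -- gap comparison between rows x i' and y i'
  have hgap_le : ∀ j, gap z (x i') α j ≤ gap z (y i') α j := by
    intro j
    by_cases hj : j = j'
    · subst hj
      have hx0 : gap z (x i') α j = 0 := by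
        unfold gap; rw [if_neg (not_le.mpr hlift)]
      rw [hx0]; exact gap_nonneg z (y i') hz α j
    · have : x i' j = y i' j := hother i' j (by tauto)
      unfold gap; rw [this]
  have hgap_eq : ∀ j, j ≠ j' → gap z (x i') α j = gap z (y i') α j := by
    intro j hj
    have : x i' j = y i' j := hother i' j (by tauto)
    unfold gap; rw [this]
  have hDnet_le : ∀ j, Dnet M z (x i') α j ≤ Dnet M z (y i') α j := by
    intro j
    unfold Dnet
    gcongr with j'' hj''
    · exact hgap_le j
    · exact hM0 j j''
    · exact hgap_le j''
  have hDnet_nonneg : ∀ (u : Fin N → Fin d → ℝ), (∀ i j, 0 ≤ u i j) → ∀ i j,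
      0 ≤ Dnet M z (u i) α j := by
    intro u hu i j
    unfold Dnet
    have h1 : 0 ≤ ∑ j'' ∈ Finset.univ.erase j, M j j'' * gap z (u i) α j'' :=
      Finset.sum_nonneg fun j'' _ => mul_nonneg (hM0 j j'') (gap_nonneg z (u i) hz α j'')
    have := gap_nonneg z (u i) hz α j
    positivity
  have hDnet_lt : Dnet M z (x i') α j' < Dnet M z (y i') α j' := by
    unfold Dnet
    have hx0 : gap z (x i') α j' = 0 := by
      unfold gap; rw [if_neg (not_le.mpr hlift)]
    have hsum : ∑ j'' ∈ Finset.univ.erase j', M j' j'' * gap z (x i') α j''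
        = ∑ j'' ∈ Finset.univ.erase j', M j' j'' * gap z (y i') α j'' := by
      apply Finset.sum_congr rfl
      intro j'' hj''
      rw [hgap_eq j'' (Finset.ne_of_mem_erase hj'')]
    rw [hx0, hsum]
    have := gap_pos z (y i') hz α j' hdep
    linarith
  -- per-row inequality at i'
  have hrow : ∑ j, w j * Dnet M z (x i') α j * rho M z w k (x i')
      < ∑ j, w j * Dnet M z (y i') α j * rho M z w k (y i') := by
    rw [hpoor]
    simp only [mul_one]
    by_cases hrho : k ≤ Dcount M z w (x i')
    · have : rho M z w k (x i') = 1 := by unfold rho; rw [if_pos hrho]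
      rw [this]
      simp only [mul_one]
      apply Finset.sum_lt_sum
      · intro j _
        exact mul_le_mul_of_nonneg_left (hDnet_le j) (hw j).le
      · exact ⟨j', Finset.mem_univ j',
          mul_lt_mul_of_pos_left hDnet_lt (hw j')⟩
    · have : rho M z w k (x i') = 0 := by unfold rho; rw [if_neg hrho]
      rw [this]
      simp only [mul_zero, Finset.sum_const_zero]
      apply Finset.sum_pos'
      · intro j _
        exact mul_nonneg (hw j).le (hDnet_nonneg y hy i' j)
      · refine ⟨j', Finset.mem_univ j', mul_pos (hw j') ?_⟩
        have h1 : 0 ≤ ∑ j'' ∈ Finset.univ.erase j', M j' j'' * gap z (y i') α j'' :=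
          Finset.sum_nonneg fun j'' _ => mul_nonneg (hM0 j' j'') (gap_nonneg z (y i') hz α j'')
        have h2 := gap_pos z (y i') hz α j' hdep
        unfold Dnet
        nlinarith
  -- total sum inequality
  have htot : ∑ i, ∑ j, w j * Dnet M z (x i) α j * rho M z w k (x i)
      < ∑ i, ∑ j, w j * Dnet M z (y i) α j * rho M z w k (y i) := by
    apply Finset.sum_lt_sum
    · intro i _
      by_cases hi : i = i'
      · subst hi; exact hrow.le
      · have hxy : x i = y i := funext fun j => hother i j (by tauto)
        rw [hxy]
    · exact ⟨i', Finset.mem_univ i', hrow⟩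
  unfold FGT
  have hpos : (0:ℝ) < 1 / ((N:ℝ) * dt) := by positivity
  exact mul_lt_mul_of_pos_left htot hpos
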